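/- If M is a real symmetric 2n×2n positive semidefinite matrix, viewed via the standard complex structure J on ℝ^{2n} ≅ ℂⁿ, then its complex Hermitian part A = (M + JᵀMJ)/2 satisfies det_{ℝ}(M) ≤ 2^{2n} det_{ℂ}(A)², where det_ℂ(A) is the determinant of the associated n×n Hermitian matrix. -/

import Mathlib

open Matrix

/-- The standard complex structure on ℝ^{2n} ≅ ℂⁿ, as a block matrix. -/
noncomputable def stdJ (n : ℕ) : Matrix (Fin n ⊕ Fin n) (Fin n ⊕ Fin n) ℝ :=
  Matrix.fromBlocks 0 (-1) 1 0

/-- The J-invariant (complex Hermitian) part of a real symmetric matrix. -/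
noncomputable def hermPart (n : ℕ) (M : Matrix (Fin n ⊕ Fin n) (Fin n ⊕ Fin n) ℝ) :
    Matrix (Fin n ⊕ Fin n) (Fin n ⊕ Fin n) ℝ :=
  (1 / 2 : ℝ) • (M + (stdJ n)ᵀ * M * stdJ n)

/-- The n×n complex Hermitian matrix associated to the J-invariant part. -/
noncomputable def assocHermitian (n : ℕ)
    (M : Matrix (Fin n ⊕ Fin n) (Fin n ⊕ Fin n) ℝ) : Matrix (Fin n) (Fin n) ℂ :=
  Matrix.of fun i j =>
    (hermPart n M (Sum.inl i) (Sum.inl j) : ℂ) +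
      Complex.I * (hermPart n M (Sum.inr i) (Sum.inl j) : ℂ)

lemma aux_det_nonneg {m : Type*} [Fintype m] [DecidableEq m]
    {A : Matrix m m ℝ} (hA : A.PosSemidef) : 0 ≤ A.det := by
  rw [hA.1.det_eq_prod_eigenvalues]
  have : ∀ i ∈ Finset.univ, (0:ℝ) ≤ hA.1.eigenvalues i := fun i _ => hA.eigenvalues_nonneg i
  simpa using Finset.prod_nonneg this

lemma aux_det_one_add {m : Type*} [Fintype m] [DecidableEq m]
    {C : Matrix m m ℝ} (hC : C.PosSemidef) : 1 ≤ (1 + C).det := by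
  have hH := hC.1
  have hU : (hH.eigenvectorUnitary : Matrix m m ℝ) * star (hH.eigenvectorUnitary : Matrix m m ℝ) = 1 :=
    (Matrix.mem_unitaryGroup_iff).mp hH.eigenvectorUnitary.2
  have key : (1 : Matrix m m ℝ) + C =
      (hH.eigenvectorUnitary : Matrix m m ℝ) *
        (1 + diagonal (RCLike.ofReal ∘ hH.eigenvalues)) *
        star (hH.eigenvectorUnitary : Matrix m m ℝ) := by
    rw [mul_add, add_mul, mul_one, hU]
    congr 1
    exact hH.spectral_theorem
  have hUU : det (hH.eigenvectorUnitary : Matrix m m ℝ) *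
      det (star (hH.eigenvectorUnitary : Matrix m m ℝ)) = 1 := by
    rw [← det_mul, hU, det_one]
  have hdiag : (1 : Matrix m m ℝ) + diagonal (RCLike.ofReal ∘ hH.eigenvalues) =
      diagonal (fun i => 1 + hH.eigenvalues i) := by
    rw [← diagonal_one, diagonal_add]
    rfl
  calc (1:ℝ) ≤ ((1 : Matrix m m ℝ) + diagonal (RCLike.ofReal ∘ hH.eigenvalues)).det := by
        rw [hdiag, det_diagonal]
        have := Finset.prod_le_prod (s := Finset.univ) (f := fun _ => (1:ℝ))
          (g := fun i => 1 + hH.eigenvalues i) (fun i _ => zero_le_one)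
          (fun i _ => by simpa using hC.eigenvalues_nonneg i)
        simpa using this
    _ = (1 + C).det := by rw [key, det_mul, det_mul]; linear_combination (-(((1 : Matrix m m ℝ) + diagonal (RCLike.ofReal ∘ hH.eigenvalues)).det)) * hUU

open scoped MatrixOrder in
lemma aux_det_le_det_add {m : Type*} [Fintype m] [DecidableEq m]
    {A B : Matrix m m ℝ} (hA : A.PosSemidef) (hB : B.PosSemidef) :
    A.det ≤ (A + B).det := by
  by_cases h : A.det = 0
  · rw [h]; exact aux_det_nonneg (hA.add hB)
  · set S := CFC.sqrt A with hSdef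
    have hS : S.PosSemidef := (CFC.sqrt_nonneg A).posSemidef
    have hSS : S * S = A := CFC.sqrt_mul_sqrt_self A hA.nonneg
    have hdS : S.det ≠ 0 := by
      intro h0
      apply h
      rw [← hSS, det_mul, h0, zero_mul]
    have hSinv : S⁻¹ᴴ = S⁻¹ := by rw [conjTranspose_nonsing_inv, hS.1]
    have hC : (S⁻¹ * B * S⁻¹).PosSemidef := by
      have := hB.conjTranspose_mul_mul_same S⁻¹
      rwa [hSinv] at this
    have key : A + B = S * (1 + S⁻¹ * B * S⁻¹) * S := by
      rw [mul_add, mul_one, add_mul, hSS, ← mul_assoc, ← mul_assoc,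
        Matrix.mul_nonsing_inv _ hdS.isUnit, one_mul, mul_assoc,
        Matrix.nonsing_inv_mul _ hdS.isUnit, mul_one]
    rw [key, det_mul, det_mul]
    have h1 := aux_det_one_add hC
    have h2 : 0 ≤ S.det := aux_det_nonneg hS
    calc A.det = S.det * 1 * S.det := by rw [mul_one, ← det_mul, hSS]
    _ ≤ S.det * (1 + S⁻¹ * B * S⁻¹).det * S.det := by nlinarith [mul_nonneg h2 h2]

lemma stdJ_transpose (n : ℕ) : (stdJ n)ᵀ = -stdJ n := by
  unfold stdJ
  rw [fromBlocks_transpose, fromBlocks_neg]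
  simp

lemma stdJ_mul_self (n : ℕ) : stdJ n * stdJ n = -1 := by
  unfold stdJ
  rw [fromBlocks_multiply, ← fromBlocks_one, fromBlocks_neg]
  simp

lemma stdJ_mul_transpose (n : ℕ) : stdJ n * (stdJ n)ᵀ = 1 := by
  rw [stdJ_transpose, mul_neg, stdJ_mul_self, neg_neg]

lemma hermPart_transpose (n : ℕ) (M : Matrix (Fin n ⊕ Fin n) (Fin n ⊕ Fin n) ℝ)
    (hsymm : M.IsSymm) : (hermPart n M)ᵀ = hermPart n M := by
  unfold hermPart
  rw [transpose_smul, transpose_add, transpose_mul, transpose_mul, transpose_transpose,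
    hsymm.eq, mul_assoc]

lemma stdJ_mul_hermPart (n : ℕ) (M : Matrix (Fin n ⊕ Fin n) (Fin n ⊕ Fin n) ℝ) :
    stdJ n * hermPart n M = hermPart n M * stdJ n := by
  unfold hermPart
  rw [mul_smul_comm, smul_mul_assoc]
  congr 1
  have e1 : stdJ n * ((stdJ n)ᵀ * M * stdJ n) = M * stdJ n := by
    rw [← mul_assoc, ← mul_assoc, stdJ_mul_transpose, one_mul]
  have e2 : (stdJ n)ᵀ * M * stdJ n * stdJ n = stdJ n * M := by
    rw [mul_assoc ((stdJ n)ᵀ * M), stdJ_mul_self, mul_neg_one, stdJ_transpose, neg_mul, neg_neg]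
  rw [mul_add, add_mul, e1, e2, add_comm]

lemma hermPart_blocks (n : ℕ) (M : Matrix (Fin n ⊕ Fin n) (Fin n ⊕ Fin n) ℝ) :
    hermPart n M = fromBlocks (hermPart n M).toBlocks₁₁ (-(hermPart n M).toBlocks₂₁)
      (hermPart n M).toBlocks₂₁ (hermPart n M).toBlocks₁₁ := by
  have hcomm := stdJ_mul_hermPart n M
  set P := hermPart n M
  rw [show P = fromBlocks P.toBlocks₁₁ P.toBlocks₁₂ P.toBlocks₂₁ P.toBlocks₂₂ from
      (fromBlocks_toBlocks P).symm,
    show stdJ n = fromBlocks 0 (-1) 1 0 from rfl, fromBlocks_multiply, fromBlocks_multiply]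
    at hcomm
  simp only [zero_mul, mul_zero, one_mul, mul_one, neg_mul, mul_neg, neg_one_mul, mul_neg_one,
    add_zero, zero_add] at hcomm
  rw [fromBlocks_inj] at hcomm
  obtain ⟨h11, h12, -, -⟩ := hcomm
  nth_rewrite 1 [← fromBlocks_toBlocks P]
  rw [← h11, neg_inj.mp h12]

lemma det_realification (n : ℕ) (E F : Matrix (Fin n) (Fin n) ℝ) :
    ((fromBlocks E (-F) F E).det : ℂ) =
      (starRingEnd ℂ) (Matrix.of fun i j => (E i j : ℂ) + Complex.I * (F i j : ℂ)).det *
        (Matrix.of fun i j => (E i j : ℂ) + Complex.I * (F i j : ℂ)).det := by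
  set E' : Matrix (Fin n) (Fin n) ℂ := E.map Complex.ofReal with hE'
  set F' : Matrix (Fin n) (Fin n) ℂ := F.map Complex.ofReal with hF'
  set A : Matrix (Fin n) (Fin n) ℂ := E' + Complex.I • F' with hA
  have hAeq : A = Matrix.of fun i j => (E i j : ℂ) + Complex.I * (F i j : ℂ) := by
    ext i j
    simp [hA, hE', hF']
  have hmap : (fromBlocks E (-F) F E).map Complex.ofReal = fromBlocks E' (-F') F' E' := by
    rw [fromBlocks_map]
    refine fromBlocks_inj.mpr ⟨rfl, ?_, rfl, rfl⟩
    ext i j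
    simp [hF']
  set U : Matrix (Fin n ⊕ Fin n) (Fin n ⊕ Fin n) ℂ :=
    fromBlocks 1 1 (Complex.I • 1) (-(Complex.I • 1)) with hU
  set D : Matrix (Fin n ⊕ Fin n) (Fin n ⊕ Fin n) ℂ :=
    fromBlocks (E' - Complex.I • F') 0 0 (E' + Complex.I • F') with hD
  have key : (fromBlocks E' (-F') F' E') * U = U * D := by
    rw [hU, hD, fromBlocks_multiply, fromBlocks_multiply]
    refine fromBlocks_inj.mpr ⟨?_, ?_, ?_, ?_⟩
    all_goals
      simp only [Matrix.mul_one, Matrix.one_mul, Matrix.mul_zero, Matrix.zero_mul, add_zero,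
        zero_add, mul_smul_comm, smul_mul_assoc, neg_mul, mul_neg, neg_smul, smul_neg, neg_neg,
        smul_smul, Complex.I_mul_I, sub_eq_add_neg, neg_one_smul]
    all_goals
      match_scalars <;> simp [Complex.I_sq]
  have hdetU0 : U.det ≠ 0 := by
    rw [hU, det_fromBlocks_one₁₁, Matrix.mul_one]
    have h2 : (-(Complex.I • 1) - Complex.I • (1 : Matrix (Fin n) (Fin n) ℂ)) =
        (-2 * Complex.I) • 1 := by module
    rw [h2, det_smul, det_one, mul_one]
    exact pow_ne_zero _ (by simp [Complex.I_ne_zero])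
  have hdd := congrArg Matrix.det key
  rw [det_mul, det_mul] at hdd
  have hPC : (fromBlocks E' (-F') F' E').det = D.det := by
    apply mul_right_cancel₀ hdetU0
    rw [hdd, mul_comm]
  have hconj : E' - Complex.I • F' = A.map (starRingEnd ℂ) := by
    ext i j
    simp [hA, hE', hF', Complex.conj_ofReal, sub_eq_add_neg]
  calc ((fromBlocks E (-F) F E).det : ℂ)
      = (fromBlocks E' (-F') F' E').det := by
        have h := RingHom.map_det Complex.ofRealHom (fromBlocks E (-F) F E)
        rw [RingHom.mapMatrix_apply] at h
        rw [← hmap]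
        exact h
    _ = (A.map (starRingEnd ℂ)).det * A.det := by
        rw [hPC, hD, det_fromBlocks_zero₂₁, hconj]
    _ = _ := by
        have h := RingHom.map_det (starRingEnd ℂ) A
        rw [RingHom.mapMatrix_apply] at h
        rw [← h, hAeq]

theorem det_le_pow_mul_complex_det_sq
    (n : ℕ) (M : Matrix (Fin n ⊕ Fin n) (Fin n ⊕ Fin n) ℝ)
    (hsymm : M.IsSymm) (hM : M.PosSemidef) :
    M.det ≤ 2 ^ (2 * n) * ((assocHermitian n M).det.re) ^ 2 := by
  set P := hermPart n M with hPdef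
  have hN : ((stdJ n)ᵀ * M * stdJ n).PosSemidef := by
    have h := hM.conjTranspose_mul_mul_same (stdJ n)
    have : (stdJ n)ᴴ = (stdJ n)ᵀ := rfl
    rwa [this] at h
  have h1 : M.det ≤ (M + (stdJ n)ᵀ * M * stdJ n).det := aux_det_le_det_add hM hN
  have h2 : M + (stdJ n)ᵀ * M * stdJ n = (2:ℝ) • P := by
    rw [hPdef]
    unfold hermPart
    rw [smul_smul]
    norm_num
  have hcard : Fintype.card (Fin n ⊕ Fin n) = 2 * n := by simp [two_mul]
  have h3 : ((2:ℝ) • P).det = 2 ^ (2*n) * P.det := by rw [det_smul, hcard]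
  have hblocks := hermPart_blocks n M
  rw [← hPdef] at hblocks
  have hPt : Pᵀ = P := hermPart_transpose n M hsymm
  have hAeq : (Matrix.of fun i j => ((P.toBlocks₁₁ i j : ℝ) : ℂ) +
      Complex.I * ((P.toBlocks₂₁ i j : ℝ) : ℂ)) = assocHermitian n M := rfl
  have e1 : ∀ a b, P (Sum.inl a) (Sum.inl b) = P (Sum.inl b) (Sum.inl a) := by
    intro a b
    conv_lhs => rw [← hPt]
    rw [transpose_apply]
  have e2 : ∀ a b, P (Sum.inr a) (Sum.inl b) = - P (Sum.inr b) (Sum.inl a) := by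
    intro a b
    have h' : P (Sum.inr a) (Sum.inl b) = P (Sum.inl b) (Sum.inr a) := by
      conv_lhs => rw [← hPt]
      rw [transpose_apply]
    have h := congrFun (congrFun hblocks (Sum.inl b)) (Sum.inr a)
    rw [h', h]
    rfl
  have hAH : (assocHermitian n M).IsHermitian := by
    ext i j
    simp only [conjTranspose_apply, assocHermitian, Matrix.of_apply, star_add, star_mul',
      RCLike.star_def, Complex.conj_ofReal, Complex.conj_I]
    rw [← hPdef, e1 j i, e2 j i]
    push_cast
    ring
  have him : (assocHermitian n M).det.im = 0 := by
    have hd : star (assocHermitian n M).det = (assocHermitian n M).det := by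
      rw [← det_conjTranspose, hAH]
    rw [Complex.star_def] at hd
    exact Complex.conj_eq_iff_im.mp hd
  have hPdet : P.det = (assocHermitian n M).det.re ^ 2 := by
    have h := det_realification n P.toBlocks₁₁ P.toBlocks₂₁
    rw [← hblocks, hAeq] at h
    have hns : (starRingEnd ℂ) (assocHermitian n M).det * (assocHermitian n M).det =
        (((assocHermitian n M).det.re ^ 2 : ℝ) : ℂ) := by
      rw [mul_comm, Complex.mul_conj]
      norm_cast
      simp [Complex.normSq_apply, him]
      ring
    rw [hns] at h
    exact_mod_cast h
  calc M.det ≤ (M + (stdJ n)ᵀ * M * stdJ n).det := h1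
    _ = ((2:ℝ) • P).det := by rw [h2]
    _ = 2 ^ (2*n) * P.det := h3
    _ = 2 ^ (2*n) * (assocHermitian n M).det.re ^ 2 := by rw [hPdet]
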